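/- For 0 ≤ i ≤ d-1, the complex B(i,d) contains the entire i-skeleton of the boundary of the d-dimensional cross-polytope: every face σ of the cross-polytope boundary with |σ| ≤ i+1 is a face of B(i,d). -/

import Mathlib

/-- The switch set of a word `u` of length `d` over the alphabet {x,y}. -/
def sw (d : ℕ) (u : ℕ → Bool) : Finset ℕ :=
  (Finset.Ico 1 d).filter (fun j => u j ≠ u (j + 1))

/-- The facet of the boundary of the `d`-cross-polytope corresponding to the
word `u`. -/
def facetOf (d : ℕ) (u : ℕ → Bool) : Finset (ℕ × Bool) :=
  (Finset.Icc 1 d).image (fun j => (j, u j))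

/-- `B(i,d)` contains the whole `i`-skeleton of the boundary of the
`d`-cross-polytope: every face `σ` of the cross-polytope boundary (a set of
vertices with at most one of `x_j, y_j` for each position `j`) with
`|σ| ≤ i+1` is a face of `B(i,d)`. -/
theorem stmt14 (d i : ℕ) (hd : 1 ≤ d) (hi : i ≤ d - 1)
    (σ : Finset (ℕ × Bool))
    (hσ : σ ⊆ Finset.Icc 1 d ×ˢ (Finset.univ : Finset Bool))
    (hone : ∀ j : ℕ, ¬((j, true) ∈ σ ∧ (j, false) ∈ σ))
    (hcard : σ.card ≤ i + 1) :
    ∃ u : ℕ → Bool, (sw d u).card ≤ i ∧ σ ⊆ facetOf d u := by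
  by_cases hσe : σ = ∅
  · refine ⟨fun _ => true, ?_, by simp [hσe]⟩
    simp [sw]
  · have hS : (σ.image Prod.fst).Nonempty := by
      simpa using Finset.nonempty_iff_ne_empty.mpr hσe
    set S := σ.image Prod.fst with hSdef
    set m := S.min' hS with hm
    set f : ℕ → Bool := fun j => decide ((j, true) ∈ σ) with hf
    set p : ℕ → ℕ := fun j => WithBot.unbotD m ((S.filter (fun k => k ≤ j)).max) with hp
    have hpA : ∀ j ∈ S, p j = j := by
      intro j hj
      have hne : (S.filter (fun k => k ≤ j)).Nonempty :=
        ⟨j, Finset.mem_filter.mpr ⟨hj, le_refl j⟩⟩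
      have hmax : (S.filter (fun k => k ≤ j)).max = ((S.filter (fun k => k ≤ j)).max' hne : ℕ) :=
        (Finset.coe_max' hne).symm
      have h1 : (S.filter (fun k => k ≤ j)).max' hne ≤ j := by
        have := Finset.max'_mem _ hne
        exact (Finset.mem_filter.mp this).2
      have h2 : j ≤ (S.filter (fun k => k ≤ j)).max' hne :=
        Finset.le_max' (S.filter (fun k => k ≤ j)) j (Finset.mem_filter.mpr ⟨hj, le_refl j⟩)
      show WithBot.unbotD m (Finset.filter (fun k => k ≤ j) S).max = j
      rw [hmax, le_antisymm h1 h2]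
      rfl
    refine ⟨fun j => f (p j), ?_, ?_⟩
    · -- switch count
      have hsub : sw d (fun j => f (p j)) ⊆ (S.erase m).image (fun k => k - 1) := by
        intro j hj
        obtain ⟨hjIco, hne⟩ := Finset.mem_filter.mp hj
        have hj1S : j + 1 ∈ S := by
          by_contra hns
          have : S.filter (fun k => k ≤ j + 1) = S.filter (fun k => k ≤ j) := by
            apply Finset.filter_congr
            intro k hk
            constructor
            · intro h
              rcases Nat.lt_or_ge k (j+1) with h' | h'
              · simpa using Nat.lt_succ_iff.mp h'
              · exfalso; apply hns
                have : k = j + 1 := le_antisymm (by simpa using h) h'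
                exact this ▸ hk
            · intro h; simpa using Nat.le_succ_of_le (by simpa using h)
          apply hne
          simp only [hp, this]
        have hj1m : j + 1 ≠ m := by
          intro heq
          have hfe : S.filter (fun k => k ≤ j) = ∅ := by
            apply Finset.filter_eq_empty_iff.mpr
            intro k hk hkj
            have := Finset.min'_le S k hk
            omega
          have hpj : p j = m := by simp [hp, hfe]
          have hpj1 : p (j+1) = j + 1 := hpA _ hj1S
          apply hne
          show f (p j) = f (p (j + 1))
          rw [hpj, hpj1, heq]
        exact Finset.mem_image.mpr ⟨j + 1, Finset.mem_erase.mpr ⟨hj1m, hj1S⟩, by omega⟩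
      have hinj : Set.InjOn (fun k => k - 1) (S.erase m) := by
        intro a ha b hb hab
        have ham : m ≤ a := Finset.min'_le S a (Finset.mem_of_mem_erase ha)
        have ha1 : a ≠ m := (Finset.mem_erase.mp ha).1
        have hbm : m ≤ b := Finset.min'_le S b (Finset.mem_of_mem_erase hb)
        have hb1 : b ≠ m := (Finset.mem_erase.mp hb).1
        have hm1 : 1 ≤ m := by
          have := Finset.min'_mem S hS
          obtain ⟨x, hx, hx2⟩ := Finset.mem_image.mp this
          have := hσ hx
          simp only [Finset.mem_product, Finset.mem_Icc] at this
          omega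
        simp only at hab
        omega
      calc (sw d (fun j => f (p j))).card ≤ ((S.erase m).image (fun k => k - 1)).card :=
            Finset.card_le_card hsub
        _ ≤ (S.erase m).card := Finset.card_image_le
        _ = S.card - 1 := Finset.card_erase_of_mem (Finset.min'_mem S hS)
        _ ≤ i := by
            have h := Finset.card_image_le (s := σ) (f := Prod.fst)
            rw [← hSdef] at h
            omega
    · -- σ ⊆ facetOf
      intro x hx
      obtain ⟨j, b⟩ := x
      have hjd : j ∈ Finset.Icc 1 d := by
        have := hσ hx
        simp only [Finset.mem_product] at this
        exact this.1
      have hjS : j ∈ S := Finset.mem_image.mpr ⟨(j, b), hx, rfl⟩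
      have hfj : f j = b := by
        cases b
        · simp only [hf, decide_eq_false_iff_not]
          exact fun h => hone j ⟨h, hx⟩
        · simp only [hf, decide_eq_true_eq]
          exact hx
      refine Finset.mem_image.mpr ⟨j, hjd, ?_⟩
      simp [hpA j hjS, hfj]
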